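/- Let 1 ≤ p < ∞ and let B_w be a unilateral weighted backward shift on ℓ^p(ℤ₊) with |w_n| ≥ 1 for all n ≥ 1. If there exists x ∈ ℓ^p(ℤ₊) such that the set {n ∈ ℕ : ‖B_w^n x − e_0‖_p < 1/2} has positive upper Banach density, then there exists m ≥ 1 such that limsup_{l→∞} l / ∏_{ν=1}^{lm} |w_ν|^p < ∞. -/

import Mathlib

open Filter Topology
open scoped ENNReal

noncomputable def blockCount (A : Set ℕ) (k s : ℕ) : ℕ :=
  Nat.card (A ∩ Set.Icc (k + 1) (k + s) : Set ℕ)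

/-- upper Banach density -/
noncomputable def upperBanachDensity (A : Set ℕ) : ℝ :=
  Filter.limsup (fun s : ℕ =>
    (Filter.limsup (fun k : ℕ => (blockCount A k s : ℝ)) Filter.atTop) / s) Filter.atTop

/-- lower Banach density -/
noncomputable def lowerBanachDensity (A : Set ℕ) : ℝ :=
  Filter.liminf (fun s : ℕ =>
    (Filter.liminf (fun k : ℕ => (blockCount A k s : ℝ)) Filter.atTop) / s) Filter.atTop

/-- the family `BD̄` of sets of positive upper Banach density -/
def upperBD (A : Set ℕ) : Prop := 0 < upperBanachDensity A

/-- the family `BD₁` of sets of lower Banach density one -/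
def BDone (A : Set ℕ) : Prop := lowerBanachDensity A = 1

/-- essential idempotent ultrafilter -/
def IsEssentialIdempotent (p : Ultrafilter ℕ) : Prop :=
  (∀ A : Set ℕ, A ∈ p ↔ {n : ℕ | {m : ℕ | n + m ∈ A} ∈ p} ∈ p) ∧
    ∀ A ∈ p, 0 < upperBanachDensity A

/-- membership in `𝒟*`, the intersection of all essential idempotents -/
def InDstar (A : Set ℕ) : Prop :=
  ∀ p : Ultrafilter ℕ, IsEssentialIdempotent p → A ∈ p

/-- limit of a real sequence along a family of subsets of ℕ -/
def FamilyLim (F : Set ℕ → Prop) (x : ℕ → ℝ) (y : ℝ) : Prop :=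
  ∀ V : Set ℝ, IsOpen V → y ∈ V → F {n | x n ∈ V}

/-- property `P_𝓕` for a sequence of maps -/
def SatisfiesP {X : Type*} [TopologicalSpace X] (T : ℕ → X → X) (F : Set ℕ → Prop) : Prop :=
  ∀ U : Set X, IsOpen U → U.Nonempty → ∃ x : X, F {n | T n x ∈ U}

/-- topological 𝒟-recurrence with respect to a sequence of scalars -/
def TopDRecurrentWrt {X : Type*} [NormedAddCommGroup X] [NormedSpace ℂ X]
    (T : X →L[ℂ] X) (l : ℕ → ℂ) : Prop :=
  ∃ p : Ultrafilter ℕ, IsEssentialIdempotent p ∧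
    ∀ U : Set X, IsOpen U → U.Nonempty → ∃ x : X, ∀ r : ℕ,
      {k : ℕ | 0 < upperBanachDensity
        {a : ℕ | ∀ j ≤ r, (T ^ (j * k)) (l a • (T ^ a) x) ∈ U}} ∈ p

/-- topological 𝒟-recurrence -/
def TopDRecurrent {X : Type*} [NormedAddCommGroup X] [NormedSpace ℂ X]
    (T : X →L[ℂ] X) : Prop :=
  TopDRecurrentWrt T fun _ => 1

/-- reiterative hypercyclicity for a sequence of maps -/
def ReiterativelyHypercyclicSeq {X : Type*} [TopologicalSpace X] (T : ℕ → X → X) : Prop :=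
  ∃ x : X, ∀ U : Set X, IsOpen U → U.Nonempty → 0 < upperBanachDensity {n | T n x ∈ U}

/-- 𝒟-reiterative hypercyclicity with respect to a sequence of scalars -/
def DReiterativelyHypercyclicWrt {X : Type*} [NormedAddCommGroup X] [NormedSpace ℂ X]
    (T : X →L[ℂ] X) (l : ℕ → ℂ) : Prop :=
  ∃ p : Ultrafilter ℕ, IsEssentialIdempotent p ∧ ∃ x : X,
    ∀ U : Set X, IsOpen U → U.Nonempty → ∀ r : ℕ,
      {k : ℕ | 0 < upperBanachDensity
        {a : ℕ | ∀ j ≤ r, (T ^ (j * k)) (l a • (T ^ a) x) ∈ U}} ∈ p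

/-- hypercyclic operator -/
def Hypercyclic {X : Type*} [NormedAddCommGroup X] [NormedSpace ℂ X] (T : X →L[ℂ] X) : Prop :=
  ∃ x : X, Dense (Set.range fun n : ℕ => (T ^ n) x)

/-- topological multiple recurrence -/
def TopMultiplyRecurrent {X : Type*} [NormedAddCommGroup X] [NormedSpace ℂ X]
    (T : X →L[ℂ] X) : Prop :=
  ∀ U : Set X, IsOpen U → U.Nonempty → ∀ r : ℕ, ∃ k : ℕ, 0 < k ∧
    ∃ x : X, ∀ j ≤ r, (T ^ (j * k)) x ∈ U

/-- `𝓕`-operator -/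
def FOperator {X : Type*} [NormedAddCommGroup X] [NormedSpace ℂ X]
    (F : Set ℕ → Prop) (T : X →L[ℂ] X) : Prop :=
  ∀ U V : Set X, IsOpen U → IsOpen V → U.Nonempty → V.Nonempty →
    F {n : ℕ | ∃ x ∈ U, (T ^ n) x ∈ V}

/-- mixing operator -/
def MixingOp {X : Type*} [NormedAddCommGroup X] [NormedSpace ℂ X]
    (T : X →L[ℂ] X) : Prop :=
  ∀ U V : Set X, IsOpen U → IsOpen V → U.Nonempty → V.Nonempty →
    {n : ℕ | ∃ x ∈ U, (T ^ n) x ∈ V} ∈ Filter.cofinite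

/-- recurrent operator -/
def RecurrentOp {X : Type*} [NormedAddCommGroup X] [NormedSpace ℂ X]
    (T : X →L[ℂ] X) : Prop :=
  ∀ U : Set X, IsOpen U → U.Nonempty →
    ∃ n : ℕ, 0 < n ∧ (U ∩ (fun x => (T ^ n) x) ⁻¹' U).Nonempty

/-- syndetic set -/
def Syndetic (A : Set ℕ) : Prop :=
  ∃ k : ℕ, 0 < k ∧ ∀ n : ℕ, ∃ i : ℕ, 1 ≤ i ∧ i ≤ k ∧ n + i ∈ A

/-- upper (asymptotic) density -/
noncomputable def upperDensity (A : Set ℕ) : ℝ :=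
  Filter.limsup (fun n : ℕ => (Nat.card (A ∩ Set.Icc 1 n : Set ℕ) : ℝ) / n) Filter.atTop

/-- bounded weight -/
def BddWeight {ι : Type*} (w : ι → ℂ) : Prop := ∃ C : ℝ, ∀ i, ‖w i‖ ≤ C

/-- unilateral weighted backward shift relative to a basis `e` -/
def IsUnilateralWeightedShift {X : Type*} [NormedAddCommGroup X] [NormedSpace ℂ X]
    (e : ℕ → X) (w : ℕ → ℂ) (B : X →L[ℂ] X) : Prop :=
  B (e 0) = 0 ∧ ∀ n : ℕ, B (e (n + 1)) = w (n + 1) • e n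

/-- bilateral weighted backward shift relative to a basis `e` -/
def IsBilateralWeightedShift {X : Type*} [NormedAddCommGroup X] [NormedSpace ℂ X]
    (e : ℤ → X) (w : ℤ → ℂ) (B : X →L[ℂ] X) : Prop :=
  ∀ k : ℤ, B (e k) = w k • e (k - 1)

/-- `B ⊕ B² ⊕ ⋯ ⊕ B^r` acting on `X^r` -/
noncomputable def directSumPow {X : Type*} [NormedAddCommGroup X] [NormedSpace ℂ X]
    (T : X →L[ℂ] X) (r : ℕ) : (Fin r → X) →L[ℂ] (Fin r → X) :=
  ContinuousLinearMap.pi fun i => (T ^ ((i : ℕ) + 1)).comp (ContinuousLinearMap.proj i)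

/-- canonical basis vector of `c₀` over a discrete index type -/
noncomputable def c0Single {α : Type*} [TopologicalSpace α] [DiscreteTopology α]
    [DecidableEq α] (k : α) : ZeroAtInftyContinuousMap α ℂ where
  toFun := fun m => if m = k then 1 else 0
  continuous_toFun := continuous_of_discreteTopology
  zero_at_infty' := by
    rw [Filter.cocompact_eq_cofinite]
    refine Filter.Tendsto.congr' ?_ tendsto_const_nhds
    filter_upwards [Filter.eventually_cofinite_ne k] with m hm
    simp [hm]

/-- the set `A_{M;j}` for a bilateral weight -/
def AMjZ (w : ℤ → ℂ) (M : ℝ) (j : ℤ) : Set ℕ :=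
  {n : ℕ | M < ∏ i ∈ Finset.Icc (j + 1) (j + (n : ℤ)), ‖w i‖}

/-- the set `Ā_{M;j}` for a bilateral weight -/
def AbarMjZ (w : ℤ → ℂ) (M : ℝ) (j : ℤ) : Set ℕ :=
  {n : ℕ | ∏ i ∈ Finset.Icc (j - (n : ℤ) + 1) j, ‖w i‖ < 1 / M}

/-- the set `A_{M;j}` for a unilateral weight -/
def AMjN (w : ℕ → ℂ) (M : ℝ) (j : ℕ) : Set ℕ :=
  {n : ℕ | M < ∏ i ∈ Finset.Icc (j + 1) (j + n), ‖w i‖}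

open Classical in
noncomputable def blockFinset (A : Set ℕ) (k s : ℕ) : Finset ℕ :=
  (Finset.Ioc k (k + s)).filter (· ∈ A)

lemma blockCount_eq (A : Set ℕ) (k s : ℕ) :
    blockCount A k s = (blockFinset A k s).card := by
  classical
  have h : (A ∩ Set.Icc (k + 1) (k + s) : Set ℕ) = ↑(blockFinset A k s) := by
    ext a
    simp only [blockFinset, Set.mem_inter_iff, Set.mem_Icc, Finset.coe_filter, Finset.mem_Ioc,
      Set.mem_setOf_eq]
    constructor
    · rintro ⟨h1, h2, h3⟩; exact ⟨⟨by omega, h3⟩, h1⟩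
    · rintro ⟨⟨h2, h3⟩, h1⟩; exact ⟨h1, by omega, h3⟩
  rw [blockCount, h, Nat.card_coe_set_eq, Set.ncard_coe_finset]

lemma blockCount_le (A : Set ℕ) (k s : ℕ) : blockCount A k s ≤ s := by
  classical
  rw [blockCount_eq]
  calc (blockFinset A k s).card ≤ (Finset.Ioc k (k + s)).card := Finset.card_filter_le _ _
    _ = s := by simp

lemma blockCount_add (A : Set ℕ) (k s t : ℕ) :
    blockCount A k (s + t) = blockCount A k s + blockCount A (k + s) t := by
  classical
  rw [blockCount_eq, blockCount_eq, blockCount_eq, blockFinset, blockFinset, blockFinset,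
    ← Finset.card_union_of_disjoint, ← Finset.filter_union]
  · congr 2
    rw [Finset.Ioc_union_Ioc_eq_Ioc (by omega) (by omega)]
    ring_nf
  · refine Finset.disjoint_filter_filter ?_
    rw [Finset.disjoint_left]
    intro a ha hb
    simp only [Finset.mem_Ioc] at ha hb
    omega

lemma shift_limsup (c : ℕ → ℝ) (s : ℕ) :
    Filter.limsup (fun k => c (k + s)) Filter.atTop = Filter.limsup c Filter.atTop := by
  rw [show (fun k => c (k + s)) = c ∘ (fun k => k + s) from rfl,
      Filter.limsup, Filter.limsup, ← Filter.map_map, Filter.map_add_atTop_eq_nat]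

lemma uBD_le (A : Set ℕ) {s : ℕ} (hs : 1 ≤ s) :
    upperBanachDensity A * s ≤ Filter.limsup (fun k => (blockCount A k s : ℝ)) Filter.atTop := by
  set α : ℕ → ℝ := fun t => Filter.limsup (fun k => (blockCount A k t : ℝ)) Filter.atTop with hα
  have hb : ∀ (t : ℕ) (c : ℕ → ℕ), (∀ k, blockCount A (c k) t ≤ t) →
      IsBoundedUnder (· ≤ ·) atTop (fun k => (blockCount A (c k) t : ℝ)) :=
    fun t c hc => isBoundedUnder_of ⟨t, fun k => by exact_mod_cast hc k⟩
  have hb' : ∀ (t : ℕ) (c : ℕ → ℕ),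
      IsBoundedUnder (· ≥ ·) atTop (fun k => (blockCount A (c k) t : ℝ)) :=
    fun t c => isBoundedUnder_of ⟨0, fun k => Nat.cast_nonneg _⟩
  have hα0 : ∀ t, 0 ≤ α t := fun t =>
    le_limsup_of_frequently_le (Frequently.of_forall fun k => Nat.cast_nonneg _)
      (hb t id fun k => blockCount_le A k t)
  have hsub : Subadditive α := by
    intro m n
    have hpt : (fun k => (blockCount A k (m + n) : ℝ)) =
        (fun k => (blockCount A k m : ℝ)) + fun k => (blockCount A (k + m) n : ℝ) := by
      funext k
      simp [blockCount_add, Nat.cast_add, Pi.add_apply]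
    calc α (m + n) = Filter.limsup ((fun k => (blockCount A k m : ℝ)) +
          fun k => (blockCount A (k + m) n : ℝ)) Filter.atTop := congrArg (fun f => Filter.limsup f Filter.atTop) hpt
      _ ≤ Filter.limsup (fun k => (blockCount A k m : ℝ)) Filter.atTop +
          Filter.limsup (fun k => (blockCount A (k + m) n : ℝ)) Filter.atTop :=
        limsup_add_le (hb' m id) (hb m id fun k => blockCount_le A k m)
          ((hb' n _).isCoboundedUnder_le)
          (hb n (· + m) fun k => blockCount_le A (k + m) n)
      _ = α m + α n := by rw [shift_limsup (fun k => (blockCount A k n : ℝ)) m]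
  have hbdd : BddBelow (Set.range fun n : ℕ => α n / n) := by
    refine ⟨0, ?_⟩
    rintro y ⟨n, rfl⟩
    exact div_nonneg (hα0 n) (Nat.cast_nonneg n)
  have hlim := hsub.tendsto_lim hbdd
  have hδ : upperBanachDensity A = hsub.lim := hlim.limsup_eq
  rw [hδ]
  have h1 := hsub.lim_le_div hbdd (n := s) (by omega)
  rw [le_div_iff₀ (by positivity)] at h1
  exact h1

lemma exists_block (A : Set ℕ) {s : ℕ} (hs : 1 ≤ s) :
    ∃ k, upperBanachDensity A * s - 1 < (blockCount A k s : ℝ) := by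
  by_contra h
  push_neg at h
  have h1 : Filter.limsup (fun k => (blockCount A k s : ℝ)) Filter.atTop ≤
      upperBanachDensity A * s - 1 :=
    limsup_le_of_le ((isBoundedUnder_of ⟨0, fun k => Nat.cast_nonneg _⟩ :
        IsBoundedUnder (· ≥ ·) atTop fun k => (blockCount A k s : ℝ)).isCoboundedUnder_le)
      (Eventually.of_forall h)
  have h2 := uBD_le A hs
  linarith

section aux

noncomputable def lpEval (p : ℝ≥0∞) [Fact (1 ≤ p)] (j : ℕ) :
    lp (fun _ : ℕ => ℂ) p →L[ℂ] ℂ :=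
  LinearMap.mkContinuous
    { toFun := fun y => y j
      map_add' := fun y z => by simp [lp.coeFn_add]
      map_smul' := fun c y => by simp [lp.coeFn_smul] }
    1 (fun y => by
      show ‖y j‖ ≤ 1 * ‖y‖
      simpa using lp.norm_apply_le_norm (zero_lt_one.trans_le (Fact.out : 1 ≤ p)).ne' y j)

@[simp] lemma lpEval_apply (p : ℝ≥0∞) [Fact (1 ≤ p)] (j : ℕ)
    (y : lp (fun _ : ℕ => ℂ) p) : lpEval p j y = y j := rfl

lemma single_eq_smul (p : ℝ≥0∞) [Fact (1 ≤ p)] (i : ℕ) (c : ℂ) :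
    lp.single p i c = c • (lp.single p i 1 : lp (fun _ : ℕ => ℂ) p) := by
  rw [← lp.single_smul]
  norm_num

lemma coord_B {p : ℝ≥0∞} [Fact (1 ≤ p)] (hp : p ≠ ∞) {w : ℕ → ℂ}
    {B : lp (fun _ : ℕ => ℂ) p →L[ℂ] lp (fun _ : ℕ => ℂ) p}
    (hB : IsUnilateralWeightedShift (fun n => lp.single p n 1) w B)
    (y : lp (fun _ : ℕ => ℂ) p) (j : ℕ) :
    (B y) j = w (j + 1) * y (j + 1) := by
  have hs := lp.hasSum_single hp y
  have h2 : HasSum (fun i => (B (lp.single p i (y i))) j) ((B y) j) :=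
    hs.mapL ((lpEval p j).comp B)
  have hzero : ∀ i, i ≠ j + 1 → (B (lp.single p i (y i))) j = 0 := by
    intro i hi
    rw [single_eq_smul, map_smul, lp.coeFn_smul, Pi.smul_apply]
    match i, hi with
    | 0, _ =>
      rw [hB.1]
      simp
    | (k+1), hi =>
      rw [hB.2 k]
      beta_reduce
      rw [lp.coeFn_smul, Pi.smul_apply,
        lp.single_apply_ne (E := fun _ : ℕ => ℂ) p k (1 : ℂ) (fun h : j = k => hi (by omega))]
      simp
  have hval : (B (lp.single p (j+1) (y (j+1)))) j = w (j + 1) * y (j + 1) := by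
    rw [single_eq_smul, map_smul, lp.coeFn_smul, Pi.smul_apply, hB.2 j, lp.coeFn_smul,
      Pi.smul_apply, lp.single_apply_self]
    simp [mul_comm]
  have := (hasSum_single (f := fun i => (B (lp.single p i (y i))) j) (j+1) hzero).unique h2
  rw [← this, hval]

lemma coord_Bpow {p : ℝ≥0∞} [Fact (1 ≤ p)] (hp : p ≠ ∞) {w : ℕ → ℂ}
    {B : lp (fun _ : ℕ => ℂ) p →L[ℂ] lp (fun _ : ℕ => ℂ) p}
    (hB : IsUnilateralWeightedShift (fun n => lp.single p n 1) w B)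
    (n : ℕ) (y : lp (fun _ : ℕ => ℂ) p) (j : ℕ) :
    ((B ^ n) y) j = (∏ ν ∈ Finset.Ioc j (j + n), w ν) * y (j + n) := by
  induction n generalizing j y with
  | zero => simp
  | succ n ih =>
    rw [pow_succ, ContinuousLinearMap.mul_apply, ih (B y) j, coord_B hp hB,
      show j + (n + 1) = (j + n) + 1 from rfl,
      Finset.prod_Ioc_succ_top (by omega : j ≤ j + n)]
    ring

end aux

theorem stmt16 (p : ℝ≥0∞) [Fact (1 ≤ p)] (_hp : p ≠ ∞)
    (w : ℕ → ℂ) (_hw1 : ∀ n : ℕ, 1 ≤ n → 1 ≤ ‖w n‖) (_hbdd : BddWeight w)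
    (B : lp (fun _ : ℕ => ℂ) p →L[ℂ] lp (fun _ : ℕ => ℂ) p)
    (_hB : IsUnilateralWeightedShift (fun n => lp.single p n 1) w B)
    (x : lp (fun _ : ℕ => ℂ) p)
    (_hx : 0 < upperBanachDensity {n : ℕ | ‖(B ^ n) x - lp.single p 0 1‖ < 1 / 2}) :
    ∃ m : ℕ, 1 ≤ m ∧
      Filter.limsup (fun l : ℕ => ENNReal.ofReal
        ((l : ℝ) / ∏ ν ∈ Finset.Icc 1 (l * m), ‖w ν‖ ^ p.toReal)) Filter.atTop < ⊤ := by
  classical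
  set A : Set ℕ := {n : ℕ | ‖(B ^ n) x - lp.single p 0 1‖ < 1 / 2} with hAdef
  set δ : ℝ := upperBanachDensity A with hδdef
  have hδ : 0 < δ := _hx
  have hp0 : p ≠ 0 := (zero_lt_one.trans_le (Fact.out : 1 ≤ p)).ne'
  set pr : ℝ := p.toReal with hprdef
  have hpr : 0 < pr := ENNReal.toReal_pos hp0 _hp
  set Q : ℕ → ℝ := fun n => ∏ ν ∈ Finset.Icc 1 n, ‖w ν‖ with hQdef
  have hIcc : ∀ n : ℕ, Finset.Icc 1 n = Finset.Ioc 0 n := fun n => by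
    ext a; simp only [Finset.mem_Icc, Finset.mem_Ioc]; omega
  have hQIoc : ∀ n, Q n = ∏ ν ∈ Finset.Ioc 0 n, ‖w ν‖ := fun n => by
    show (∏ ν ∈ Finset.Icc 1 n, ‖w ν‖) = _
    rw [hIcc]
  have hone_le : ∀ s : Finset ℕ, (∀ i ∈ s, 1 ≤ i) → (1 : ℝ) ≤ ∏ ν ∈ s, ‖w ν‖ := by
    intro s hs
    calc (1 : ℝ) = ∏ _ν ∈ s, 1 := by simp
      _ ≤ ∏ ν ∈ s, ‖w ν‖ :=
        Finset.prod_le_prod (fun i _ => zero_le_one) (fun i hi => _hw1 i (hs i hi))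
  have hQ1 : ∀ n, 1 ≤ Q n := fun n => by
    show (1 : ℝ) ≤ ∏ ν ∈ Finset.Icc 1 n, ‖w ν‖
    exact hone_le _ fun i hi => (Finset.mem_Icc.mp hi).1
  have hQpos : ∀ n, 0 < Q n := fun n => lt_of_lt_of_le zero_lt_one (hQ1 n)
  have hQmono : ∀ a b : ℕ, a ≤ b → Q a ≤ Q b := fun a b hab => by
    rw [hQIoc, hQIoc, ← Finset.prod_Ioc_consecutive (fun ν => ‖w ν‖) (Nat.zero_le a) hab]
    exact le_mul_of_one_le_right (Finset.prod_nonneg fun i _ => norm_nonneg _)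
      (hone_le _ fun i hi => by have := (Finset.mem_Ioc.mp hi).1; omega)
  have hQsplit : ∀ j n : ℕ, Q (j + n) = Q j * ∏ ν ∈ Finset.Ioc j (j + n), ‖w ν‖ := fun j n => by
    rw [hQIoc, hQIoc, ← Finset.prod_Ioc_consecutive _ (Nat.zero_le j) (Nat.le_add_right j n)]
  have hA0 : ∀ n ∈ A, (2 * Q n)⁻¹ < ‖x n‖ := by
    intro n hn
    have h1 : ‖((B ^ n) x - lp.single p 0 1 : lp (fun _ : ℕ => ℂ) p) 0‖ < 1 / 2 := by
      exact lt_of_le_of_lt (lp.norm_apply_le_norm hp0 _ 0) hn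
    rw [lp.coeFn_sub, Pi.sub_apply, lp.single_apply_self] at h1
    have h4 : |‖((B ^ n) x) 0‖ - ‖(1 : ℂ)‖| ≤ ‖((B ^ n) x) 0 - 1‖ := abs_norm_sub_norm_le _ _
    have h5 := abs_lt.mp (lt_of_le_of_lt h4 h1)
    rw [norm_one] at h5
    have h2 : (1 : ℝ) / 2 < ‖((B ^ n) x) 0‖ := by linarith [h5.1]
    have hco : ‖((B ^ n) x) 0‖ = Q n * ‖x n‖ := by
      have h3 := coord_Bpow _hp _hB n x 0
      rw [zero_add] at h3
      rw [h3, norm_mul, norm_prod, ← hQIoc n]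
    rw [hco] at h2
    have h7 : (2 * Q n) * (2 * Q n)⁻¹ = 1 := mul_inv_cancel₀ (mul_pos two_pos (hQpos n)).ne'
    nlinarith [hQpos n]
  have hkey : ∀ n ∈ A, ∀ J : Finset ℕ, (∀ j ∈ J, 1 ≤ j ∧ n + j ∈ A) →
      ∑ j ∈ J, ((2 * Q j)⁻¹) ^ pr < (2⁻¹ : ℝ) ^ pr := by
    intro n hn J hJ
    have hterm : ∀ j ∈ J, ((2 * Q j)⁻¹) ^ pr ≤ ‖((B ^ n) x - lp.single p 0 1 : lp (fun _ : ℕ => ℂ) p) j‖ ^ pr := by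
      intro j hj
      obtain ⟨hj1, hjA⟩ := hJ j hj
      have hco : ((B ^ n) x - lp.single p 0 1 : lp (fun _ : ℕ => ℂ) p) j = ((B ^ n) x) j := by
        rw [lp.coeFn_sub, Pi.sub_apply,
          lp.single_apply_ne (E := fun _ : ℕ => ℂ) p 0 (1 : ℂ) (by omega : j ≠ 0), sub_zero]
      rw [hco, coord_Bpow _hp _hB n x j, norm_mul, norm_prod]
      have hxl : (2 * Q (j + n))⁻¹ < ‖x (j + n)‖ := by
        rw [add_comm j n]; exact hA0 _ hjA
      set R := ∏ ν ∈ Finset.Ioc j (j + n), ‖w ν‖ with hRdef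
      have hR : (0 : ℝ) < R :=
        Finset.prod_pos fun i hi => lt_of_lt_of_le zero_lt_one
          (_hw1 i (by have := (Finset.mem_Ioc.mp hi).1; omega))
      have hRne := hR.ne'
      have h8 : (2 * Q j)⁻¹ = R * (2 * Q (j + n))⁻¹ := by
        rw [hQsplit j n, ← hRdef, show (2 : ℝ) * (Q j * R) = (2 * Q j) * R by ring,
          mul_inv (2 * Q j) R, mul_comm R ((2 * Q j)⁻¹ * R⁻¹), mul_assoc,
          inv_mul_cancel₀ hRne, mul_one]
      have hineq : (2 * Q j)⁻¹ ≤ R * ‖x (j + n)‖ := by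
        rw [h8]
        exact mul_le_mul_of_nonneg_left hxl.le hR.le
      exact Real.rpow_le_rpow (inv_nonneg.mpr (mul_pos two_pos (hQpos j)).le) hineq hpr.le
    calc ∑ j ∈ J, ((2 * Q j)⁻¹) ^ pr
        ≤ ∑ j ∈ J, ‖((B ^ n) x - lp.single p 0 1 : lp (fun _ : ℕ => ℂ) p) j‖ ^ pr := Finset.sum_le_sum hterm
      _ ≤ ‖(B ^ n) x - lp.single p 0 1‖ ^ pr := lp.sum_rpow_le_norm_rpow hpr _ J
      _ < (2⁻¹ : ℝ) ^ pr :=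
          Real.rpow_lt_rpow (norm_nonneg _) (by rw [← one_div]; exact hn) hpr
  refine ⟨1, le_refl 1, ?_⟩
  have hbound : ∀ l : ℕ, 4 / δ ≤ (l : ℝ) →
      ENNReal.ofReal ((l : ℝ) / ∏ ν ∈ Finset.Icc 1 (l * 1), ‖w ν‖ ^ pr) ≤
        ENNReal.ofReal (2 / δ) := by
    intro l hl
    apply ENNReal.ofReal_le_ofReal
    have h4δ : (0 : ℝ) < 4 / δ := by positivity
    have hl1 : 1 ≤ l := by
      rcases Nat.eq_zero_or_pos l with h | h
      · exfalso; rw [h] at hl; push_cast at hl; linarith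
      · omega
    have h4l : (4 : ℝ) ≤ δ * l := by
      rw [div_le_iff₀ hδ] at hl; linarith
    rw [mul_one, Real.finset_prod_rpow _ _ (fun i _ => norm_nonneg _) pr]
    show (l : ℝ) / Q l ^ pr ≤ 2 / δ
    obtain ⟨k, hk⟩ := exists_block A hl1
    set F := blockFinset A k l with hF
    have hFcard : (δ * l - 1) < (F.card : ℝ) := by
      rw [hF, ← blockCount_eq]; exact_mod_cast hk
    have hF1 : 1 ≤ F.card := by
      have h1 : (1 : ℝ) ≤ (F.card : ℝ) := by linarith
      exact_mod_cast h1
    have hne : F.Nonempty := Finset.card_pos.mp hF1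
    set n := F.min' hne with hn
    have hnF : n ∈ F := F.min'_mem hne
    have hmemF : ∀ a ∈ F, a ∈ A ∧ k < a ∧ a ≤ k + l := by
      intro a ha
      rw [hF, blockFinset, Finset.mem_filter, Finset.mem_Ioc] at ha
      tauto
    set J := (F.erase n).image (fun a => a - n) with hJ
    have hJcard : J.card = F.card - 1 := by
      rw [hJ, Finset.card_image_of_injOn, Finset.card_erase_of_mem hnF]
      intro a ha b hb hab
      have ha' := F.min'_le a (Finset.mem_of_mem_erase ha)
      have hb' := F.min'_le b (Finset.mem_of_mem_erase hb)
      simp only at hab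
      omega
    have hJel : ∀ j ∈ J, (1 ≤ j ∧ n + j ∈ A) ∧ j ≤ l := by
      intro j hj
      rw [hJ, Finset.mem_image] at hj
      obtain ⟨a, ha, rfl⟩ := hj
      have haF := Finset.mem_of_mem_erase ha
      have hane : a ≠ n := Finset.ne_of_mem_erase ha
      have hge := F.min'_le a haF
      obtain ⟨haA, hk1, hk2⟩ := hmemF a haF
      obtain ⟨-, hnk1, -⟩ := hmemF n hnF
      refine ⟨⟨by omega, ?_⟩, by omega⟩
      rw [show n + (a - n) = a by omega]
      exact haA
    have hsum := hkey n (hmemF n hnF).1 J (fun j hj => (hJel j hj).1)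
    have hterml : ∀ j ∈ J, ((2 * Q l)⁻¹ : ℝ) ^ pr ≤ ((2 * Q j)⁻¹) ^ pr := by
      intro j hj
      refine Real.rpow_le_rpow (inv_nonneg.mpr (mul_pos two_pos (hQpos l)).le) ?_ hpr.le
      exact inv_anti₀ (mul_pos two_pos (hQpos j))
        (mul_le_mul_of_nonneg_left (hQmono j l (hJel j hj).2) (by norm_num))
    have hcard_sum : (J.card : ℝ) * ((2 * Q l)⁻¹) ^ pr ≤ ∑ j ∈ J, ((2 * Q j)⁻¹) ^ pr := by
      calc (J.card : ℝ) * ((2 * Q l)⁻¹) ^ pr = ∑ _j ∈ J, ((2 * Q l)⁻¹ : ℝ) ^ pr := by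
            rw [Finset.sum_const, nsmul_eq_mul]
        _ ≤ _ := Finset.sum_le_sum hterml
    have h9 : (J.card : ℝ) * ((2 * Q l)⁻¹) ^ pr < (2⁻¹ : ℝ) ^ pr :=
      lt_of_le_of_lt hcard_sum hsum
    have h2pr : (0 : ℝ) < (2 : ℝ) ^ pr := Real.rpow_pos_of_pos two_pos pr
    have hapos : (0 : ℝ) < Q l ^ pr := Real.rpow_pos_of_pos (hQpos l) pr
    rw [Real.inv_rpow (mul_pos two_pos (hQpos l)).le, Real.inv_rpow (by norm_num : (0:ℝ) ≤ 2),
      Real.mul_rpow (by norm_num : (0:ℝ) ≤ 2) (hQpos l).le, mul_inv] at h9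
    have h11 := mul_lt_mul_of_pos_right h9 (mul_pos h2pr hapos)
    have hL : (J.card : ℝ) * (((2:ℝ) ^ pr)⁻¹ * (Q l ^ pr)⁻¹) * (2 ^ pr * Q l ^ pr)
        = (J.card : ℝ) := by field_simp
    have hR' : ((2:ℝ) ^ pr)⁻¹ * (2 ^ pr * Q l ^ pr) = Q l ^ pr := by
      field_simp
    rw [hL, hR'] at h11
    have hJc : (δ * l - 2 : ℝ) ≤ (J.card : ℝ) := by
      rw [hJcard, Nat.cast_sub hF1]
      push_cast
      linarith
    have hQl2 : δ * l / 2 < Q l ^ pr := by linarith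
    rw [div_le_div_iff₀ hapos hδ]
    linarith
  calc Filter.limsup (fun l : ℕ => ENNReal.ofReal
        ((l : ℝ) / ∏ ν ∈ Finset.Icc 1 (l * 1), ‖w ν‖ ^ pr)) Filter.atTop
      ≤ ENNReal.ofReal (2 / δ) := by
        refine Filter.limsup_le_of_le (by isBoundedDefault) ?_
        filter_upwards [Filter.eventually_ge_atTop ⌈4 / δ⌉₊] with l hl
        exact hbound l (le_trans (Nat.le_ceil _) (by exact_mod_cast hl))
    _ < ⊤ := ENNReal.ofReal_lt_top
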